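/- Let R be a Noetherian commutative ring and M a finitely generated R-module. Then the dual module M* = Hom_R(M,R) is reflexive, i.e., the natural map M* → (M*)** is an isomorphism, provided R is an integrally closed Noetherian domain. -/
import Mathlib

open Module LinearMap Function

universe u v

/-- Key elementary lemma: if `P` embeds into `Rⁿ`, then any functional on `P`
becomes the restriction of a functional on `Rⁿ` after multiplying by a nonzero `r`. -/
lemma aux_extend {R : Type u} [CommRing R] [IsDomain R] (n : ℕ) :
    ∀ {P : Type v} [AddCommGroup P] [Module R P]
      (ι : P →ₗ[R] (Fin n → R)) (_ : Function.Injective ι) (x : P →ₗ[R] R),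
      ∃ r : R, r ≠ 0 ∧ ∃ c : Fin n → R, ∀ p, r * x p = ∑ i, c i * ι p i := by
  induction n with
  | zero =>
    intro P _ _ ι hι x
    refine ⟨1, one_ne_zero, Fin.elim0, fun p => ?_⟩
    have hp : p = 0 := hι (Subsingleton.elim _ _)
    subst hp
    simp
  | succ n ih =>
    intro P _ _ ι hι x
    by_cases h : ∀ p, ι p (Fin.last n) = 0
    · -- last coordinate always vanishes; drop it
      set ι' : P →ₗ[R] (Fin n → R) := (LinearMap.funLeft R R Fin.castSucc).comp ι with hι'
      have hinj : Function.Injective ι' := by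
        intro p q hpq
        apply hι
        funext i
        refine Fin.lastCases ?_ ?_ i
        · rw [h p, h q]
        · intro j
          exact congrFun hpq j
      obtain ⟨r, hr, c, hc⟩ := ih ι' hinj x
      refine ⟨r, hr, Fin.snoc c 0, fun p => ?_⟩
      rw [Fin.sum_univ_castSucc]
      simp only [Fin.snoc_castSucc, Fin.snoc_last, zero_mul, add_zero]
      exact hc p
    · push_neg at h
      obtain ⟨w, hw⟩ := h
      set s : R := ι w (Fin.last n) with hs
      set π : P →ₗ[R] R := (LinearMap.proj (Fin.last n)).comp ι with hπ
      have hπw : π w = s := rfl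
      set P₀ := LinearMap.ker π with hP₀
      set ι₀ : P₀ →ₗ[R] (Fin n → R) :=
        ((LinearMap.funLeft R R Fin.castSucc).comp ι).comp P₀.subtype with hι₀
      have hinj₀ : Function.Injective ι₀ := by
        intro u v huv
        ext
        apply hι
        funext i
        refine Fin.lastCases ?_ ?_ i
        · have hu : ι (u : P) (Fin.last n) = 0 := u.2
          have hv : ι (v : P) (Fin.last n) = 0 := v.2
          rw [hu, hv]
        · intro j
          exact congrFun huv j
      obtain ⟨r₀, hr₀, c, hc⟩ := ih ι₀ hinj₀ (x.comp P₀.subtype)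
      refine ⟨r₀ * s, mul_ne_zero hr₀ hw,
        Fin.snoc (fun i => s * c i) (r₀ * x w - ∑ i, c i * ι w i.castSucc), fun p => ?_⟩
      -- the element s • p - (π p) • w lies in P₀
      have hq : s • p - (π p) • w ∈ P₀ := by
        simp only [hP₀, LinearMap.mem_ker, map_sub, map_smul, smul_eq_mul, hπw]
        ring
      have key := hc ⟨_, hq⟩
      have hx : x.comp P₀.subtype ⟨_, hq⟩ = s * x p - π p * x w := by
        simp [map_sub, map_smul, smul_eq_mul]
      have hi : ∀ i : Fin n, ι₀ ⟨_, hq⟩ i = s * ι p i.castSucc - π p * ι w i.castSucc := by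
        intro i
        simp [hι₀, map_sub, map_smul, LinearMap.funLeft, smul_eq_mul]
      rw [hx] at key
      simp only [hi] at key
      have expand : ∑ i, c i * (s * ι p i.castSucc - π p * ι w i.castSucc)
          = s * (∑ i, c i * ι p i.castSucc) - π p * (∑ i, c i * ι w i.castSucc) := by
        rw [Finset.mul_sum, Finset.mul_sum, ← Finset.sum_sub_distrib]
        exact Finset.sum_congr rfl fun i _ => by ring
      rw [expand] at key
      -- now conclude
      rw [Fin.sum_univ_castSucc]
      simp only [Fin.snoc_castSucc, Fin.snoc_last]
      have hlast : ι p (Fin.last n) = π p := rfl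
      rw [hlast]
      have sumrw : ∑ i : Fin n, s * c i * ι p i.castSucc
          = s * ∑ i, c i * ι p i.castSucc := by
        rw [Finset.mul_sum]
        exact Finset.sum_congr rfl fun i _ => by ring
      rw [sumrw]
      linear_combination key

/-- If R is an integrally closed Noetherian domain and M a finitely
generated R-module, then the dual M* = Hom_R(M,R) is reflexive: the natural evaluation
map M* → (M*)** is an isomorphism (i.e. bijective). -/
theorem stmt_12 {R : Type*} [CommRing R] [IsDomain R] [IsNoetherianRing R]
    [IsIntegrallyClosed R]
    (M : Type*) [AddCommGroup M] [Module R M] [Module.Finite R M] :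
    Function.Bijective (Module.Dual.eval R (Module.Dual R M)) := by
  set ε := Module.Dual.eval R M with hε
  -- triangle identity : ε* ∘ eval_{M*} = id
  have triangle : ∀ f : Module.Dual R M,
      ε.dualMap (Module.Dual.eval R (Module.Dual R M) f) = f := by
    intro f
    ext m
    rfl
  -- every element of M** is, up to a nonzero scalar, in the image of ε
  have torsion : ∀ x : Module.Dual R (Module.Dual R M),
      ∃ r : R, r ≠ 0 ∧ ∃ m : M, r • x = ε m := by
    intro x
    obtain ⟨n, g, hg⟩ := Module.Finite.exists_fin (R := R) (M := M)
    set ι : Module.Dual R M →ₗ[R] (Fin n → R) :=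
      LinearMap.pi (fun i => Module.Dual.eval R M (g i)) with hιdef
    have hinj : Function.Injective ι := by
      rw [← LinearMap.ker_eq_bot]
      rw [LinearMap.ker_eq_bot']
      intro f hf
      apply LinearMap.ext_on hg
      rintro _ ⟨i, rfl⟩
      exact congrFun hf i
    obtain ⟨r, hr, c, hc⟩ := aux_extend n ι hinj x
    refine ⟨r, hr, ∑ i, c i • g i, ?_⟩
    ext f
    have := hc f
    simp only [hιdef, LinearMap.pi_apply, Module.Dual.eval_apply] at this
    simp only [LinearMap.smul_apply, smul_eq_mul, hε, Module.Dual.eval_apply,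
      map_sum, map_smul, smul_eq_mul, LinearMap.sum_apply]
    exact this
  -- ε* is injective
  have hdualinj : Function.Injective ε.dualMap := by
    rw [← LinearMap.ker_eq_bot, LinearMap.ker_eq_bot']
    intro φ hφ
    ext x
    obtain ⟨r, hr, m, hm⟩ := torsion x
    have h1 : r * φ x = 0 := by
      have : φ (r • x) = φ (ε m) := by rw [hm]
      rw [map_smul, smul_eq_mul] at this
      rw [this]
      have : ε.dualMap φ m = 0 := by rw [hφ]; rfl
      exact this
    rcases mul_eq_zero.mp h1 with h | h
    · exact absurd h hr
    · simpa using h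
  constructor
  · intro f g hfg
    rw [← triangle f, ← triangle g, hfg]
  · intro z
    refine ⟨ε.dualMap z, hdualinj ?_⟩
    exact triangle (ε.dualMap z)
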